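/- arXiv:2508.12331 — 3 statements merged into one kernel-verified Lean document; each statement's English description precedes it below -/
import Mathlib

section
/- Let α ∈ ℝ and let φ be a non-negative locally integrable function satisfying C₃ ≤ φ(s)/s^{2α+1} ≤ C₄ for all 0<s<1, for some constants C₃,C₄>0. Then for every non-negative measurable function h on (0,∞) and every x>0, C₃·∫ₓ^∞ ln(t/x)·h(t)dt ≤ ∫ₓ^∞ (φ(x/y)/x^{2α+1})·y^{2α}·(∫_y^∞ h(t)dt) dy ≤ C₄·∫ₓ^∞ ln(t/x)·h(t)dt. -/
open MeasureTheory Set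
open scoped ENNReal

private lemma aux_eq (α x y : ℝ) (hx : 0 < x) (hy : 0 < y) :
    (x/y) ^ (2*α+1) / x ^ (2*α+1) * y ^ (2*α) = y⁻¹ := by
  rw [Real.div_rpow hx.le hy.le, Real.rpow_add hy, Real.rpow_one]
  have h1 : x ^ (2*α+1) ≠ 0 := (Real.rpow_pos_of_pos hx _).ne'
  have h2 : y ^ (2*α) ≠ 0 := (Real.rpow_pos_of_pos hy _).ne'
  field_simp

private lemma key_swap (h : ℝ → ℝ≥0∞) (hh : Measurable h) (x : ℝ) (hx : 0 < x) :
    (∫⁻ y in Ioi x, ENNReal.ofReal y⁻¹ * ∫⁻ t in Ioi y, h t)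
      = ∫⁻ t in Ioi x, ENNReal.ofReal (Real.log (t/x)) * h t := by
  have hfm : Measurable (fun p : ℝ × ℝ =>
      if p.1 < p.2 then ENNReal.ofReal p.1⁻¹ * h p.2 else 0) := by
    apply Measurable.ite (measurableSet_lt measurable_fst measurable_snd)
    · exact (measurable_fst.inv.ennreal_ofReal).mul (hh.comp measurable_snd)
    · exact measurable_const
  have e1 : ∀ y : ℝ, ENNReal.ofReal y⁻¹ * ∫⁻ t in Ioi y, h t
      = ∫⁻ t, (if y < t then ENNReal.ofReal y⁻¹ * h t else 0) := by
    intro y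
    rw [← lintegral_const_mul' _ _ ENNReal.ofReal_ne_top,
      ← lintegral_indicator measurableSet_Ioi _]
    simp [Set.indicator_apply, mem_Ioi]
  have e2 : (∫⁻ y in Ioi x, ∫⁻ t, (if y < t then ENNReal.ofReal y⁻¹ * h t else 0))
      = ∫⁻ t, ∫⁻ y in Ioi x, (if y < t then ENNReal.ofReal y⁻¹ * h t else 0) :=
    lintegral_lintegral_swap hfm.aemeasurable
  have e3 : ∀ t : ℝ, (∫⁻ y in Ioi x, (if y < t then ENNReal.ofReal y⁻¹ * h t else 0))
      = (∫⁻ y in Ioo x t, ENNReal.ofReal y⁻¹) * h t := by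
    intro t
    rw [← lintegral_mul_const _ measurable_inv.ennreal_ofReal, ← Set.Iio_inter_Ioi,
      ← Measure.restrict_restrict measurableSet_Iio,
      ← lintegral_indicator measurableSet_Iio _]
    simp [Set.indicator_apply, mem_Iio]
  have e4 : ∀ t : ℝ, x < t →
      (∫⁻ y in Ioo x t, ENNReal.ofReal y⁻¹) = ENNReal.ofReal (Real.log (t/x)) := by
    intro t ht
    have hint : IntegrableOn (fun y : ℝ => y⁻¹) (Ioo x t) := by
      apply ((continuousOn_inv₀.mono ?_).integrableOn_Icc).mono_set Ioo_subset_Icc_self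
      intro z hz
      exact (hx.trans_le hz.1).ne'
    have hnn : 0 ≤ᵐ[volume.restrict (Ioo x t)] fun y : ℝ => y⁻¹ := by
      filter_upwards [ae_restrict_mem measurableSet_Ioo] with y hy
      exact inv_nonneg.2 (hx.trans hy.1).le
    rw [← ofReal_integral_eq_lintegral_ofReal hint hnn]
    congr 1
    rw [← integral_Ioc_eq_integral_Ioo, ← intervalIntegral.integral_of_le ht.le,
      integral_inv_of_pos hx (hx.trans ht)]
  calc (∫⁻ y in Ioi x, ENNReal.ofReal y⁻¹ * ∫⁻ t in Ioi y, h t)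
      = ∫⁻ y in Ioi x, ∫⁻ t, (if y < t then ENNReal.ofReal y⁻¹ * h t else 0) := by
        simp_rw [e1]
    _ = ∫⁻ t, ∫⁻ y in Ioi x, (if y < t then ENNReal.ofReal y⁻¹ * h t else 0) := e2
    _ = ∫⁻ t, (Ioi x).indicator (fun t => ENNReal.ofReal (Real.log (t/x)) * h t) t := by
        congr 1
        funext t
        rw [e3]
        by_cases ht : x < t
        · rw [e4 t ht]
          simp [Set.indicator_apply, ht]
        · simp [Set.indicator_apply, ht, Set.Ioo_eq_empty ht]
    _ = ∫⁻ t in Ioi x, ENNReal.ofReal (Real.log (t/x)) * h t :=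
        lintegral_indicator measurableSet_Ioi _

theorem I2_estimate (α : ℝ) (φ : ℝ → ℝ) (C₃ C₄ : ℝ) (hC₃ : 0 < C₃) (hC₄ : 0 < C₄)
    (hφnn : ∀ s, 0 ≤ φ s) (hφloc : LocallyIntegrableOn φ (Ioi 0))
    (hb : ∀ s : ℝ, 0 < s → s < 1 → C₃ ≤ φ s / s ^ (2*α+1) ∧ φ s / s ^ (2*α+1) ≤ C₄)
    (h : ℝ → ℝ≥0∞) (hh : Measurable h) (x : ℝ) (hx : 0 < x) :
    ENNReal.ofReal C₃ * (∫⁻ t in Ioi x, ENNReal.ofReal (Real.log (t/x)) * h t) ≤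
      (∫⁻ y in Ioi x, ENNReal.ofReal (φ (x/y) / x ^ (2*α+1) * y ^ (2*α)) * ∫⁻ t in Ioi y, h t) ∧
    (∫⁻ y in Ioi x, ENNReal.ofReal (φ (x/y) / x ^ (2*α+1) * y ^ (2*α)) * ∫⁻ t in Ioi y, h t) ≤
      ENNReal.ofReal C₄ * (∫⁻ t in Ioi x, ENNReal.ofReal (Real.log (t/x)) * h t) := by
  have hbound : ∀ y ∈ Ioi x, C₃ * y⁻¹ ≤ φ (x/y) / x ^ (2*α+1) * y ^ (2*α)
      ∧ φ (x/y) / x ^ (2*α+1) * y ^ (2*α) ≤ C₄ * y⁻¹ := by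
    intro y hy
    rw [mem_Ioi] at hy
    have hy0 : 0 < y := hx.trans hy
    have hs0 : 0 < x / y := div_pos hx hy0
    have hs1 : x / y < 1 := (div_lt_one hy0).2 hy
    obtain ⟨h1, h2⟩ := hb _ hs0 hs1
    have hsp : 0 < (x/y) ^ (2*α+1) := Real.rpow_pos_of_pos hs0 _
    have hxp : 0 < x ^ (2*α+1) := Real.rpow_pos_of_pos hx _
    have hyp : 0 ≤ y ^ (2*α) := (Real.rpow_pos_of_pos hy0 _).le
    have h1' : C₃ * (x/y) ^ (2*α+1) ≤ φ (x/y) := (le_div_iff₀ hsp).1 h1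
    have h2' : φ (x/y) ≤ C₄ * (x/y) ^ (2*α+1) := (div_le_iff₀ hsp).1 h2
    constructor
    · calc C₃ * y⁻¹ = C₃ * ((x/y) ^ (2*α+1) / x ^ (2*α+1) * y ^ (2*α)) := by
            rw [aux_eq α x y hx hy0]
        _ = (C₃ * (x/y) ^ (2*α+1)) / x ^ (2*α+1) * y ^ (2*α) := by ring
        _ ≤ φ (x/y) / x ^ (2*α+1) * y ^ (2*α) := by gcongr
    · calc φ (x/y) / x ^ (2*α+1) * y ^ (2*α)
          ≤ (C₄ * (x/y) ^ (2*α+1)) / x ^ (2*α+1) * y ^ (2*α) := by gcongr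
        _ = C₄ * ((x/y) ^ (2*α+1) / x ^ (2*α+1) * y ^ (2*α)) := by ring
        _ = C₄ * y⁻¹ := by rw [aux_eq α x y hx hy0]
  have hkey := key_swap h hh x hx
  constructor
  · rw [← hkey, ← lintegral_const_mul' _ _ ENNReal.ofReal_ne_top]
    apply lintegral_mono_ae
    rw [ae_restrict_iff' measurableSet_Ioi]
    filter_upwards with y hy
    calc ENNReal.ofReal C₃ * (ENNReal.ofReal y⁻¹ * ∫⁻ t in Ioi y, h t)
        = ENNReal.ofReal (C₃ * y⁻¹) * ∫⁻ t in Ioi y, h t := by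
          rw [← mul_assoc, ← ENNReal.ofReal_mul hC₃.le]
      _ ≤ ENNReal.ofReal (φ (x/y) / x ^ (2*α+1) * y ^ (2*α)) * ∫⁻ t in Ioi y, h t :=
          mul_le_mul_left (ENNReal.ofReal_le_ofReal (hbound y hy).1) _
  · rw [← hkey, ← lintegral_const_mul' _ _ ENNReal.ofReal_ne_top]
    apply lintegral_mono_ae
    rw [ae_restrict_iff' measurableSet_Ioi]
    filter_upwards with y hy
    calc ENNReal.ofReal (φ (x/y) / x ^ (2*α+1) * y ^ (2*α)) * ∫⁻ t in Ioi y, h t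
        ≤ ENNReal.ofReal (C₄ * y⁻¹) * ∫⁻ t in Ioi y, h t :=
          mul_le_mul_left (ENNReal.ofReal_le_ofReal (hbound y hy).2) _
      _ = ENNReal.ofReal C₄ * (ENNReal.ofReal y⁻¹ * ∫⁻ t in Ioi y, h t) := by
          rw [← mul_assoc, ← ENNReal.ofReal_mul hC₄.le]
end

section
/- Let α ∈ ℝ and let φ be a non-negative locally integrable function satisfying: there are constants C₁,C₂,C₃,C₄>0 with C₁ ≤ φ(s)/s^{2α} ≤ C₂ for all s ≥ 1 and C₃ ≤ φ(s)/s^{2α+1} ≤ C₄ for all 0<s<1. Then there exist constants c,C>0 (depending only on C₁,C₂,C₃,C₄) such that for every non-negative measurable function h on (0,∞) and every x>0, c·E(x) ≤ H_{α,φ}(I*h)(x) ≤ C·E(x), where E(x) = (1/x)·∫₀ˣ t·h(t)dt + ∫ₓ^∞ h(t)dt + ∫ₓ^∞ ln(t/x)·h(t)dt. -/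
open MeasureTheory Set
open scoped ENNReal

/-- The Dunkl–Hausdorff operator (after the change of variables `y = x/t`),
acting on `ℝ≥0∞`-valued functions. -/
noncomputable def dhL (α : ℝ) (φ : ℝ → ℝ) (f : ℝ → ℝ≥0∞) (x : ℝ) : ℝ≥0∞ :=
  ∫⁻ y in Ioi (0:ℝ), ENNReal.ofReal (φ (x/y) / x ^ (2*α+1) * y ^ (2*α)) * f y

/-- `(I*h)(y) = ∫_y^∞ h`. -/
noncomputable def IstarL (h : ℝ → ℝ≥0∞) (y : ℝ) : ℝ≥0∞ := ∫⁻ t in Ioi y, h t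

lemma swap_aux {h g : ℝ → ℝ≥0∞} (hm : Measurable h) (hg : Measurable g)
    {s : Set ℝ} (hs : MeasurableSet s) :
    ∫⁻ y in s, g y * ∫⁻ t in Ioi y, h t =
      ∫⁻ t, (∫⁻ y in s ∩ Iio t, g y) * h t := by
  have hind : ∀ y t : ℝ, {q : ℝ × ℝ | q.1 < q.2}.indicator (fun q => h q.2) (y, t)
      = (Ioi y).indicator h t := by
    intro y t
    by_cases hyt : y < t <;> simp [Set.indicator_apply, hyt]
  have h1 : ∀ y : ℝ, g y * ∫⁻ t in Ioi y, h t =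
      ∫⁻ t, g y * {q : ℝ × ℝ | q.1 < q.2}.indicator (fun q => h q.2) (y, t) := by
    intro y
    simp_rw [hind]
    rw [lintegral_const_mul _ (hm.indicator measurableSet_Ioi),
      lintegral_indicator measurableSet_Ioi]
  have hF : Measurable fun p : ℝ × ℝ =>
      g p.1 * {q : ℝ × ℝ | q.1 < q.2}.indicator (fun q => h q.2) p :=
    (hg.comp measurable_fst).mul
      ((hm.comp measurable_snd).indicator (measurableSet_lt measurable_fst measurable_snd))
  calc ∫⁻ y in s, g y * ∫⁻ t in Ioi y, h t
      = ∫⁻ y in s, ∫⁻ t, g y * {q : ℝ × ℝ | q.1 < q.2}.indicator (fun q => h q.2) (y, t) := by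
        exact lintegral_congr h1
    _ = ∫⁻ t, ∫⁻ y in s, g y * {q : ℝ × ℝ | q.1 < q.2}.indicator (fun q => h q.2) (y, t) := by
        exact lintegral_lintegral_swap hF.aemeasurable
    _ = ∫⁻ t, (∫⁻ y in s ∩ Iio t, g y) * h t := by
        refine lintegral_congr fun t => ?_
        have h2 : ∀ y : ℝ, g y * {q : ℝ × ℝ | q.1 < q.2}.indicator (fun q => h q.2) (y, t)
            = (Iio t).indicator (fun y => g y * h t) y := by
          intro y
          by_cases hyt : y < t <;> simp [Set.indicator_apply, hyt]
        simp_rw [h2]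
        rw [lintegral_indicator measurableSet_Iio, Measure.restrict_restrict measurableSet_Iio,
          Set.inter_comm (Iio t) s]
        exact lintegral_mul_const _ hg

lemma log_int {x t : ℝ} (hx : 0 < x) (ht : x < t) :
    ∫⁻ y in Ioo x t, ENNReal.ofReal (1/y) = ENNReal.ofReal (Real.log (t/x)) := by
  have h0 : (0:ℝ) ∉ uIcc x t := by
    rw [uIcc_of_le ht.le, mem_Icc]
    push_neg
    intro h'
    linarith
  have hcont : ContinuousOn (fun y : ℝ => 1/y) (uIcc x t) := by
    apply ContinuousOn.div continuousOn_const continuousOn_id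
    intro y hy
    rw [uIcc_of_le ht.le] at hy
    exact ne_of_gt (lt_of_lt_of_le hx hy.1)
  have hint : IntegrableOn (fun y : ℝ => 1/y) (Ioc x t) volume :=
    (intervalIntegrable_iff_integrableOn_Ioc_of_le ht.le).1 hcont.intervalIntegrable
  have hpos : 0 ≤ᶠ[ae (volume.restrict (Ioc x t))] fun y : ℝ => 1/y := by
    refine (ae_restrict_iff' measurableSet_Ioc).2 (ae_of_all _ fun y hy => ?_)
    exact div_nonneg zero_le_one (le_of_lt (hx.trans hy.1))
  calc ∫⁻ y in Ioo x t, ENNReal.ofReal (1/y)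
      = ∫⁻ y in Ioc x t, ENNReal.ofReal (1/y) := by
        rw [Measure.restrict_congr_set Ioo_ae_eq_Ioc]
    _ = ENNReal.ofReal (∫ y in Ioc x t, 1/y) :=
        (ofReal_integral_eq_lintegral_ofReal hint hpos).symm
    _ = ENNReal.ofReal (∫ y in x..t, 1/y) := by
        rw [intervalIntegral.integral_of_le ht.le]
    _ = ENNReal.ofReal (Real.log (t/x)) := by rw [integral_one_div h0]

lemma kern_small {α x y : ℝ} (hx : 0 < x) (hy : 0 < y) (a : ℝ) :
    a / x ^ (2*α+1) * y ^ (2*α) = a / (x/y) ^ (2*α) * (1/x) := by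
  have h1 : (x/y) ^ (2*α) = x ^ (2*α) / y ^ (2*α) := Real.div_rpow hx.le hy.le _
  have h2 : x ^ (2*α+1) = x ^ (2*α) * x := by
    rw [Real.rpow_add hx, Real.rpow_one]
  have p1 : (0:ℝ) < x ^ (2*α) := Real.rpow_pos_of_pos hx _
  have p2 : (0:ℝ) < y ^ (2*α) := Real.rpow_pos_of_pos hy _
  rw [h1, h2]
  field_simp

lemma kern_big {α x y : ℝ} (hx : 0 < x) (hy : 0 < y) (a : ℝ) :
    a / x ^ (2*α+1) * y ^ (2*α) = a / (x/y) ^ (2*α+1) * (1/y) := by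
  have h1 : (x/y) ^ (2*α+1) = x ^ (2*α+1) / y ^ (2*α+1) := Real.div_rpow hx.le hy.le _
  have h2 : y ^ (2*α+1) = y ^ (2*α) * y := by
    rw [Real.rpow_add hy, Real.rpow_one]
  have p1 : (0:ℝ) < x ^ (2*α+1) := Real.rpow_pos_of_pos hx _
  have p2 : (0:ℝ) < y ^ (2*α) := Real.rpow_pos_of_pos hy _
  rw [h1, h2]
  field_simp

theorem dunklH_Istar_estimate (α C₁ C₂ C₃ C₄ : ℝ)
    (hC₁ : 0 < C₁) (hC₂ : 0 < C₂) (hC₃ : 0 < C₃) (hC₄ : 0 < C₄) :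
    ∃ c C : ℝ, 0 < c ∧ 0 < C ∧
      ∀ φ : ℝ → ℝ, (∀ s, 0 ≤ φ s) → LocallyIntegrableOn φ (Ioi 0) →
        (∀ s : ℝ, 1 ≤ s → C₁ ≤ φ s / s ^ (2*α) ∧ φ s / s ^ (2*α) ≤ C₂) →
        (∀ s : ℝ, 0 < s → s < 1 → C₃ ≤ φ s / s ^ (2*α+1) ∧ φ s / s ^ (2*α+1) ≤ C₄) →
        ∀ h : ℝ → ℝ≥0∞, Measurable h → ∀ x : ℝ, 0 < x →
          ENNReal.ofReal c * (ENNReal.ofReal (1/x) * (∫⁻ t in Ioo (0:ℝ) x, ENNReal.ofReal t * h t) + (∫⁻ t in Ioi x, h t) + (∫⁻ t in Ioi x, ENNReal.ofReal (Real.log (t/x)) * h t)) ≤ dhL α φ (IstarL h) x ∧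
          dhL α φ (IstarL h) x ≤ ENNReal.ofReal C * (ENNReal.ofReal (1/x) * (∫⁻ t in Ioo (0:ℝ) x, ENNReal.ofReal t * h t) + (∫⁻ t in Ioi x, h t) + (∫⁻ t in Ioi x, ENNReal.ofReal (Real.log (t/x)) * h t)) := by
  refine ⟨min C₁ C₃, max C₂ C₄, lt_min hC₁ hC₃, lt_of_lt_of_le hC₂ (le_max_left _ _), ?_⟩
  intro φ hφ hloc hge hlt h hm x hx
  -- Abbreviations
  set P : ℝ≥0∞ := ∫⁻ t in Ioo (0:ℝ) x, ENNReal.ofReal t * h t with hP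
  set Q : ℝ≥0∞ := ∫⁻ t in Ioi x, h t with hQ
  set R : ℝ≥0∞ := ∫⁻ t in Ioi x, ENNReal.ofReal (Real.log (t/x)) * h t with hR
  set A : ℝ≥0∞ := ∫⁻ y in Ioc (0:ℝ) x, IstarL h y with hA'
  set B : ℝ≥0∞ := ∫⁻ y in Ioi x, ENNReal.ofReal (1/y) * IstarL h y with hB'
  -- A = P + x·Q
  have hA : A = P + ENNReal.ofReal x * Q := by
    have hs0 := swap_aux (g := fun _ => (1:ℝ≥0∞)) hm measurable_const
      (measurableSet_Ioc (a := (0:ℝ)) (b := x))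
    simp only [one_mul, setLIntegral_one] at hs0
    rw [hA', show (fun y => IstarL h y) = fun y => ∫⁻ t in Ioi y, h t from rfl]
    rw [hs0]
    rw [← lintegral_add_compl (fun t => volume (Ioc (0:ℝ) x ∩ Iio t) * h t)
      (measurableSet_Ioi (a := (0:ℝ)))]
    have hz : ∫⁻ t in (Ioi (0:ℝ))ᶜ, volume (Ioc (0:ℝ) x ∩ Iio t) * h t = 0 := by
      rw [compl_Ioi]
      have : ∀ t ∈ Iic (0:ℝ), volume (Ioc (0:ℝ) x ∩ Iio t) * h t = 0 := by
        intro t ht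
        have he : Ioc (0:ℝ) x ∩ Iio t = ∅ := by
          ext y
          simp only [mem_inter_iff, mem_Ioc, mem_Iio, mem_empty_iff_false, iff_false, not_and]
          rintro ⟨h1, _⟩ h2
          exact absurd (h1.trans h2) (not_lt.2 ht)
        rw [he]
        simp
      rw [setLIntegral_congr_fun measurableSet_Iic this]
      simp
    rw [hz, add_zero, ← Ioc_union_Ioi_eq_Ioi hx.le,
      lintegral_union measurableSet_Ioi (Ioc_disjoint_Ioi le_rfl)]
    congr 1
    · -- piece on Ioc 0 x equals P
      have hcg : ∀ t ∈ Ioc (0:ℝ) x, volume (Ioc (0:ℝ) x ∩ Iio t) * h t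
          = ENNReal.ofReal t * h t := by
        intro t ht
        have he : Ioc (0:ℝ) x ∩ Iio t = Ioo 0 t := by
          ext y
          simp only [mem_inter_iff, mem_Ioc, mem_Iio, mem_Ioo]
          exact ⟨fun ⟨⟨a, _⟩, c⟩ => ⟨a, c⟩, fun ⟨a, c⟩ => ⟨⟨a, c.le.trans ht.2⟩, c⟩⟩
        rw [he, Real.volume_Ioo, sub_zero]
      rw [setLIntegral_congr_fun measurableSet_Ioc hcg, hP,
        ← Measure.restrict_congr_set (Ioo_ae_eq_Ioc (a := (0:ℝ)) (b := x))]
    · -- piece on Ioi x equals ofReal x * Q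
      have hcg : ∀ t ∈ Ioi x, volume (Ioc (0:ℝ) x ∩ Iio t) * h t
          = ENNReal.ofReal x * h t := by
        intro t ht
        have he : Ioc (0:ℝ) x ∩ Iio t = Ioc 0 x := by
          rw [inter_eq_left]
          exact fun y hy => lt_of_le_of_lt hy.2 ht
        rw [he, Real.volume_Ioc, sub_zero]
      rw [setLIntegral_congr_fun measurableSet_Ioi hcg, hQ,
        lintegral_const_mul' _ _ ENNReal.ofReal_ne_top]
  -- B = R
  have hgmeas : Measurable fun y : ℝ => ENNReal.ofReal (1/y) :=
    (measurable_const.div measurable_id).ennreal_ofReal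
  have hB : B = R := by
    have hs0 := swap_aux hm hgmeas (measurableSet_Ioi (a := x))
    rw [hB', show (fun y => ENNReal.ofReal (1/y) * IstarL h y)
      = fun y => ENNReal.ofReal (1/y) * ∫⁻ t in Ioi y, h t from rfl]
    rw [hs0]
    rw [← lintegral_add_compl (fun t => (∫⁻ y in Ioi x ∩ Iio t, ENNReal.ofReal (1/y)) * h t)
      (measurableSet_Ioi (a := x))]
    have hz : ∫⁻ t in (Ioi x)ᶜ, (∫⁻ y in Ioi x ∩ Iio t, ENNReal.ofReal (1/y)) * h t = 0 := by
      rw [compl_Ioi]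
      have : ∀ t ∈ Iic x, (∫⁻ y in Ioi x ∩ Iio t, ENNReal.ofReal (1/y)) * h t = 0 := by
        intro t ht
        have he : Ioi x ∩ Iio t = ∅ := by
          ext y
          simp only [mem_inter_iff, mem_Ioi, mem_Iio, mem_empty_iff_false, iff_false, not_and]
          intro h1 h2
          exact absurd (h1.trans h2) (not_lt.2 ht)
        rw [he]
        simp
      rw [setLIntegral_congr_fun measurableSet_Iic this]
      simp
    have hmain : ∫⁻ t in Ioi x, (∫⁻ y in Ioi x ∩ Iio t, ENNReal.ofReal (1/y)) * h t
        = ∫⁻ t in Ioi x, ENNReal.ofReal (Real.log (t/x)) * h t := by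
      refine setLIntegral_congr_fun measurableSet_Ioi (fun t ht => ?_)
      rw [Ioi_inter_Iio, log_int hx ht]
    rw [hz, add_zero, hmain, hR]
  -- Key identity
  have hQQ : ENNReal.ofReal (1/x) * (ENNReal.ofReal x * Q) = Q := by
    rw [← mul_assoc, ← ENNReal.ofReal_mul (by positivity), one_div,
      inv_mul_cancel₀ hx.ne', ENNReal.ofReal_one, one_mul]
  have hAB : ENNReal.ofReal (1/x) * A + B = ENNReal.ofReal (1/x) * P + Q + R := by
    rw [hA, hB, mul_add, hQQ]
  -- Split dhL
  have hsplit : dhL α φ (IstarL h) x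
      = (∫⁻ y in Ioc (0:ℝ) x, ENNReal.ofReal (φ (x/y) / x ^ (2*α+1) * y ^ (2*α)) * IstarL h y)
        + ∫⁻ y in Ioi x, ENNReal.ofReal (φ (x/y) / x ^ (2*α+1) * y ^ (2*α)) * IstarL h y := by
    rw [dhL, ← Ioc_union_Ioi_eq_Ioi hx.le,
      lintegral_union measurableSet_Ioi (Ioc_disjoint_Ioi le_rfl)]
  -- Lower bounds
  have low1 : ENNReal.ofReal (C₁ * (1/x)) * A
      ≤ ∫⁻ y in Ioc (0:ℝ) x, ENNReal.ofReal (φ (x/y) / x ^ (2*α+1) * y ^ (2*α)) * IstarL h y := by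
    rw [hA', ← lintegral_const_mul' _ _ ENNReal.ofReal_ne_top]
    refine setLIntegral_mono' measurableSet_Ioc fun y hy => ?_
    refine mul_le_mul_left (ENNReal.ofReal_le_ofReal ?_) _
    rw [kern_small hx hy.1]
    exact mul_le_mul_of_nonneg_right
      ((hge (x/y) ((one_le_div hy.1).mpr hy.2)).1) (by positivity)
  have up1 : (∫⁻ y in Ioc (0:ℝ) x, ENNReal.ofReal (φ (x/y) / x ^ (2*α+1) * y ^ (2*α)) * IstarL h y)
      ≤ ENNReal.ofReal (C₂ * (1/x)) * A := by
    rw [hA', ← lintegral_const_mul' _ _ ENNReal.ofReal_ne_top]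
    refine setLIntegral_mono' measurableSet_Ioc fun y hy => ?_
    refine mul_le_mul_left (ENNReal.ofReal_le_ofReal ?_) _
    rw [kern_small hx hy.1]
    exact mul_le_mul_of_nonneg_right
      ((hge (x/y) ((one_le_div hy.1).mpr hy.2)).2) (by positivity)
  have low2 : ENNReal.ofReal C₃ * B
      ≤ ∫⁻ y in Ioi x, ENNReal.ofReal (φ (x/y) / x ^ (2*α+1) * y ^ (2*α)) * IstarL h y := by
    rw [hB', ← lintegral_const_mul' _ _ ENNReal.ofReal_ne_top]
    refine setLIntegral_mono' measurableSet_Ioi fun y hy => ?_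
    have hy0 : 0 < y := hx.trans hy
    rw [← mul_assoc, ← ENNReal.ofReal_mul hC₃.le]
    refine mul_le_mul_left (ENNReal.ofReal_le_ofReal ?_) _
    rw [kern_big hx hy0]
    exact mul_le_mul_of_nonneg_right
      ((hlt (x/y) (div_pos hx hy0) ((div_lt_one hy0).mpr hy)).1) (by positivity)
  have up2 : (∫⁻ y in Ioi x, ENNReal.ofReal (φ (x/y) / x ^ (2*α+1) * y ^ (2*α)) * IstarL h y)
      ≤ ENNReal.ofReal C₄ * B := by
    rw [hB', ← lintegral_const_mul' _ _ ENNReal.ofReal_ne_top]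
    refine setLIntegral_mono' measurableSet_Ioi fun y hy => ?_
    have hy0 : 0 < y := hx.trans hy
    rw [← mul_assoc, ← ENNReal.ofReal_mul hC₄.le]
    refine mul_le_mul_left (ENNReal.ofReal_le_ofReal ?_) _
    rw [kern_big hx hy0]
    exact mul_le_mul_of_nonneg_right
      ((hlt (x/y) (div_pos hx hy0) ((div_lt_one hy0).mpr hy)).2) (by positivity)
  constructor
  · calc ENNReal.ofReal (min C₁ C₃) * (ENNReal.ofReal (1/x) * P + Q + R)
        = ENNReal.ofReal (min C₁ C₃) * (ENNReal.ofReal (1/x) * A + B) := by rw [hAB]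
      _ = ENNReal.ofReal (min C₁ C₃) * (ENNReal.ofReal (1/x) * A)
            + ENNReal.ofReal (min C₁ C₃) * B := mul_add _ _ _
      _ ≤ ENNReal.ofReal C₁ * (ENNReal.ofReal (1/x) * A) + ENNReal.ofReal C₃ * B :=
          add_le_add (mul_le_mul_left (ENNReal.ofReal_le_ofReal (min_le_left _ _)) _)
            (mul_le_mul_left (ENNReal.ofReal_le_ofReal (min_le_right _ _)) _)
      _ = ENNReal.ofReal (C₁ * (1/x)) * A + ENNReal.ofReal C₃ * B := by
          rw [ENNReal.ofReal_mul hC₁.le, mul_assoc]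
      _ ≤ _ := by
          rw [hsplit]
          exact add_le_add low1 low2
  · calc dhL α φ (IstarL h) x
        ≤ ENNReal.ofReal (C₂ * (1/x)) * A + ENNReal.ofReal C₄ * B := by
          rw [hsplit]
          exact add_le_add up1 up2
      _ = ENNReal.ofReal C₂ * (ENNReal.ofReal (1/x) * A) + ENNReal.ofReal C₄ * B := by
          rw [ENNReal.ofReal_mul hC₂.le, mul_assoc]
      _ ≤ ENNReal.ofReal (max C₂ C₄) * (ENNReal.ofReal (1/x) * A)
            + ENNReal.ofReal (max C₂ C₄) * B :=
          add_le_add (mul_le_mul_left (ENNReal.ofReal_le_ofReal (le_max_left _ _)) _)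
            (mul_le_mul_left (ENNReal.ofReal_le_ofReal (le_max_right _ _)) _)
      _ = ENNReal.ofReal (max C₂ C₄) * (ENNReal.ofReal (1/x) * A + B) := (mul_add _ _ _).symm
      _ = ENNReal.ofReal (max C₂ C₄) * (ENNReal.ofReal (1/x) * P + Q + R) := by rw [hAB]
end

section
/- Let α ∈ ℝ and let φ be a non-negative locally integrable function satisfying C₃ ≤ φ(s)/s^{2α+1} ≤ C₄ for all 0<s<1, for some constants C₃,C₄>0. Then for every non-negative measurable function h on (0,∞) and every x>0, C₃·((1/x)·∫₀ˣ t·h(t)dt + ∫ₓ^∞ h(t)dt) ≤ ∫₀ˣ (φ(y/x)·x^{2α}/y^{2α+1})·(∫_y^∞ h(t)dt) dy ≤ C₄·((1/x)·∫₀ˣ t·h(t)dt + ∫ₓ^∞ h(t)dt). -/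
open MeasureTheory Set
open scoped ENNReal

lemma key_int (h : ℝ → ℝ≥0∞) (hh : Measurable h) (x : ℝ) (hx : 0 < x) :
    (∫⁻ y in Ioo (0:ℝ) x, ∫⁻ t in Ioi y, h t) =
      (∫⁻ t in Ioo (0:ℝ) x, ENNReal.ofReal t * h t) + ENNReal.ofReal x * ∫⁻ t in Ioi x, h t := by
  have step1 : (∫⁻ y in Ioo (0:ℝ) x, ∫⁻ t in Ioi y, h t) =
      ∫⁻ y in Ioo (0:ℝ) x, ∫⁻ t, (Ioi y).indicator h t := by
    refine setLIntegral_congr_fun measurableSet_Ioo (fun y _ => ?_)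
    rw [lintegral_indicator measurableSet_Ioi]
  have meas : Measurable (Function.uncurry fun y t => (Ioi y).indicator h t) := by
    have : (Function.uncurry fun y t => (Ioi y).indicator h t) =
        {p : ℝ × ℝ | p.1 < p.2}.indicator (fun p => h p.2) := by
      funext p
      by_cases hp : p.1 < p.2 <;>
        simp [Function.uncurry, Set.indicator, hp]
    rw [this]
    exact (hh.comp measurable_snd).indicator (measurableSet_lt measurable_fst measurable_snd)
  have step2 : (∫⁻ y in Ioo (0:ℝ) x, ∫⁻ t, (Ioi y).indicator h t) =
      ∫⁻ t, ∫⁻ y in Ioo (0:ℝ) x, (Ioi y).indicator h t := by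
    exact lintegral_lintegral_swap meas.aemeasurable
  have step3 : ∀ t : ℝ, (∫⁻ y in Ioo (0:ℝ) x, (Ioi y).indicator h t) =
      ENNReal.ofReal (min x t) * h t := by
    intro t
    have : ∀ y : ℝ, (Ioi y).indicator h t = (Iio t).indicator (fun _ => h t) y := by
      intro y
      by_cases hy : y < t <;> simp [Set.indicator, hy]
    simp_rw [this]
    rw [lintegral_indicator measurableSet_Iio, Measure.restrict_restrict measurableSet_Iio,
      setLIntegral_const]
    have : Iio t ∩ Ioo 0 x = Ioo 0 (min x t) := by
      ext y; simp only [mem_inter_iff, mem_Iio, mem_Ioo, lt_min_iff]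
      tauto
    rw [this, Real.volume_Ioo, mul_comm]
    ring_nf
  rw [step1, step2]
  simp_rw [step3]
  have split0 : (∫⁻ t, ENNReal.ofReal (min x t) * h t) =
      ∫⁻ t in Ioi (0:ℝ), ENNReal.ofReal (min x t) * h t := by
    rw [← lintegral_add_compl (μ := volume) _ (measurableSet_Ioi (a := (0:ℝ)))]
    have : (∫⁻ t in (Ioi (0:ℝ))ᶜ, ENNReal.ofReal (min x t) * h t) = 0 := by
      rw [compl_Ioi]
      have : (∫⁻ t in Iic (0:ℝ), ENNReal.ofReal (min x t) * h t) =
          ∫⁻ t in Iic (0:ℝ), 0 := by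
        refine setLIntegral_congr_fun measurableSet_Iic
          (fun t ht => ?_)
        have : min x t ≤ 0 := le_trans (min_le_right _ _) ht
        simp [ENNReal.ofReal_eq_zero.mpr this]
      rw [this]; simp
    rw [this, add_zero]
  rw [split0, ← Ioc_union_Ioi_eq_Ioi hx.le,
    lintegral_union measurableSet_Ioi Ioc_disjoint_Ioi_same]
  congr 1
  · have : (∫⁻ t in Ioc (0:ℝ) x, ENNReal.ofReal (min x t) * h t) =
        ∫⁻ t in Ioc (0:ℝ) x, ENNReal.ofReal t * h t := by
      refine setLIntegral_congr_fun measurableSet_Ioc (fun t ht => ?_)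
      rw [min_eq_right ht.2]
    rw [this, setLIntegral_congr (Ioo_ae_eq_Ioc (α := ℝ) (a := 0) (b := x)).symm]
  · have : (∫⁻ t in Ioi x, ENNReal.ofReal (min x t) * h t) =
        ∫⁻ t in Ioi x, ENNReal.ofReal x * h t := by
      refine setLIntegral_congr_fun measurableSet_Ioi (fun t ht => ?_)
      rw [min_eq_left (le_of_lt ht)]
    rw [this, lintegral_const_mul' _ _ ENNReal.ofReal_ne_top]

theorem I3_estimate (α : ℝ) (φ : ℝ → ℝ) (C₃ C₄ : ℝ) (hC₃ : 0 < C₃) (hC₄ : 0 < C₄)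
    (hφnn : ∀ s, 0 ≤ φ s) (hφloc : LocallyIntegrableOn φ (Ioi 0))
    (hb : ∀ s : ℝ, 0 < s → s < 1 → C₃ ≤ φ s / s ^ (2*α+1) ∧ φ s / s ^ (2*α+1) ≤ C₄)
    (h : ℝ → ℝ≥0∞) (hh : Measurable h) (x : ℝ) (hx : 0 < x) :
    ENNReal.ofReal C₃ * (ENNReal.ofReal (1/x) * (∫⁻ t in Ioo (0:ℝ) x, ENNReal.ofReal t * h t) + (∫⁻ t in Ioi x, h t)) ≤
      (∫⁻ y in Ioo (0:ℝ) x, ENNReal.ofReal (φ (y/x) * x ^ (2*α) / y ^ (2*α+1)) * ∫⁻ t in Ioi y, h t) ∧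
    (∫⁻ y in Ioo (0:ℝ) x, ENNReal.ofReal (φ (y/x) * x ^ (2*α) / y ^ (2*α+1)) * ∫⁻ t in Ioi y, h t) ≤
      ENNReal.ofReal C₄ * (ENNReal.ofReal (1/x) * (∫⁻ t in Ioo (0:ℝ) x, ENNReal.ofReal t * h t) + (∫⁻ t in Ioi x, h t)) := by
  set F : ℝ → ℝ≥0∞ := fun y => ∫⁻ t in Ioi y, h t with hF
  set A : ℝ≥0∞ := ∫⁻ t in Ioo (0:ℝ) x, ENNReal.ofReal t * h t with hA
  set B : ℝ≥0∞ := ∫⁻ t in Ioi x, h t with hB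
  -- pointwise identity on Ioo 0 x
  have hpoint : ∀ y ∈ Ioo (0:ℝ) x,
      φ (y/x) * x ^ (2*α) / y ^ (2*α+1) = (φ (y/x) / (y/x) ^ (2*α+1)) * (1/x) := by
    intro y hy
    have hy0 : 0 < y := hy.1
    have hs : (y/x) ^ (2*α+1) = y ^ (2*α+1) / x ^ (2*α+1) :=
      Real.div_rpow hy0.le hx.le _
    have hxr : x ^ (2*α+1) = x ^ (2*α) * x := by
      rw [Real.rpow_add hx, Real.rpow_one]
    have h1 : (0:ℝ) < y ^ (2*α+1) := Real.rpow_pos_of_pos hy0 _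
    have h2 : (0:ℝ) < x ^ (2*α+1) := Real.rpow_pos_of_pos hx _
    rw [hs]
    field_simp
    rw [hxr]; ring
  have hsmem : ∀ y ∈ Ioo (0:ℝ) x, 0 < y/x ∧ y/x < 1 := fun y hy =>
    ⟨div_pos hy.1 hx, (div_lt_one hx).mpr hy.2⟩
  -- key integral identity
  have key : (∫⁻ y in Ioo (0:ℝ) x, F y) = A + ENNReal.ofReal x * B :=
    key_int h hh x hx
  -- algebra helpers
  have e2 : ENNReal.ofReal (1/x) * ENNReal.ofReal x = 1 := by
    rw [← ENNReal.ofReal_mul (by positivity), one_div, inv_mul_cancel₀ hx.ne',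
      ENNReal.ofReal_one]
  have combine : ∀ C : ℝ, 0 < C →
      ENNReal.ofReal C * (ENNReal.ofReal (1/x) * A + B) =
        ENNReal.ofReal (C/x) * (A + ENNReal.ofReal x * B) := by
    intro C hC
    have e1 : ENNReal.ofReal (C/x) = ENNReal.ofReal C * ENNReal.ofReal (1/x) := by
      rw [← ENNReal.ofReal_mul hC.le, div_eq_mul_one_div]
    rw [e1, mul_assoc, mul_add (ENNReal.ofReal (1/x)) A (ENNReal.ofReal x * B),
      ← mul_assoc (ENNReal.ofReal (1/x)) (ENNReal.ofReal x) B, e2, one_mul]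
  constructor
  · rw [combine C₃ hC₃, ← key, ← lintegral_const_mul' _ _ ENNReal.ofReal_ne_top]
    refine setLIntegral_mono' measurableSet_Ioo fun y hy => ?_
    refine mul_le_mul_left (ENNReal.ofReal_le_ofReal ?_) _
    rw [hpoint y hy, div_eq_mul_one_div C₃ x]
    exact mul_le_mul_of_nonneg_right (hb _ (hsmem y hy).1 (hsmem y hy).2).1 (by positivity)
  · rw [combine C₄ hC₄, ← key, ← lintegral_const_mul' _ _ ENNReal.ofReal_ne_top]
    refine setLIntegral_mono' measurableSet_Ioo fun y hy => ?_
    refine mul_le_mul_left (ENNReal.ofReal_le_ofReal ?_) _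
    rw [hpoint y hy, div_eq_mul_one_div C₄ x]
    exact mul_le_mul_of_nonneg_right (hb _ (hsmem y hy).1 (hsmem y hy).2).2 (by positivity)
end
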